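/- arXiv:1612.07591 — 2 statements merged into one kernel-verified Lean document; each statement's English description precedes it below -/
import Mathlib

section
/- Let A-cal(s) be the unique formal power series in x (with coefficients polynomial in s and q) satisfying A-cal(s) = 1 + xsq + x·(1 + xsq/(1-sq²))·A-cal(1) - (x²s²q³/(1-sq²))·A-cal(sq²). Then A-cal(1) = J-cal(-xq)/J-cal(x), where J-cal(x) = Σ_{n≥0} (-1)^{⌈n/2⌉} x^n q^{n(n-1)/2} / (q²;q²)_{⌊n/2⌋}. -/
open PowerSeries

noncomputable section
namespace FC

/-- The field `ℚ(q)` of rational functions in `q`. -/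
abbrev K : Type := RatFunc ℚ

/-- The variable `q`. -/
def q : K := RatFunc.X

/-- The field `ℚ(q)(s)` of rational functions in `s` over `ℚ(q)`. -/
abbrev S : Type := RatFunc K

/-- The variable `s`. -/
def sS : S := RatFunc.X

/-- `q` as an element of `ℚ(q)(s)`. -/
def qS : S := RatFunc.C q

/-- A power series in `x` over `ℚ(q)(s)` has coefficients polynomial in `s`
(and hence in `s` and `q`, up to denominators in `q` alone). -/
def PolyCoeffs (A : PowerSeries S) : Prop :=
  ∀ n, (PowerSeries.coeff n A).denom = 1

/-- Evaluation of a rational function of `s` at `s = 1`. -/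
def ev1 (f : S) : K := RatFunc.eval (RingHom.id K) 1 f

/-- `A(1)`: evaluate each coefficient at `s = 1`, giving a power series in `x` over `ℚ(q)`. -/
def atOneK (A : PowerSeries S) : PowerSeries K :=
  PowerSeries.mk fun n => ev1 (PowerSeries.coeff n A)

/-- `A(1)`, lifted back to a power series over `ℚ(q)(s)`. -/
def atOne (A : PowerSeries S) : PowerSeries S :=
  PowerSeries.mk fun n => RatFunc.C (ev1 (PowerSeries.coeff n A))

/-- Substitution `s ↦ s·q^j` in each coefficient. -/
def atSq (j : ℕ) (A : PowerSeries S) : PowerSeries S :=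
  PowerSeries.mk fun n =>
    RatFunc.eval (RatFunc.C : K →+* S) (RatFunc.C (q ^ j) * RatFunc.X)
      (PowerSeries.coeff n A)

/-- `(q²;q²)_m = ∏_{i=1}^{m} (1 - q^{2i})`. -/
def poch2 (m : ℕ) : K := ∏ i ∈ Finset.range m, (1 - q ^ (2 * (i + 1)))

/-- `𝒥(x) = Σ_{n≥0} (-1)^{⌈n/2⌉} x^n q^{C(n,2)} / (q²;q²)_{⌊n/2⌋}`. -/
def Jcal : PowerSeries K :=
  PowerSeries.mk fun n => (-1 : K) ^ ((n + 1) / 2) * q ^ n.choose 2 / poch2 (n / 2)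

/-! ### Auxiliary development -/

set_option maxHeartbeats 1000000

lemma q_ne_zero : q ≠ 0 := RatFunc.X_ne_zero

lemma q_pow_ne_one {m : ℕ} (hm : m ≠ 0) : q ^ m ≠ 1 := by
  intro h
  have h2 : (Polynomial.X : Polynomial ℚ) ^ m = 1 := by
    apply RatFunc.algebraMap_injective ℚ
    simpa [map_pow, RatFunc.algebraMap_X, q] using h
  have h3 := congrArg (Polynomial.eval 0) h2
  simp [zero_pow hm] at h3

/-- `1 - q^(2i)` factors are nonzero. -/
lemma Kd_ne_zero (i : ℕ) : (1 : K) - q ^ (2*i+2) ≠ 0 := by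
  intro h
  have : q ^ (2*i+2) = 1 := by linear_combination -h
  exact q_pow_ne_one (by omega) this

lemma poch2_ne_zero (m : ℕ) : poch2 m ≠ 0 := by
  rw [poch2]
  apply Finset.prod_ne_zero_iff.mpr
  intro i _
  have := Kd_ne_zero i
  intro h
  apply this
  have : (2 : ℕ) * (i+1) = 2*i+2 := by ring
  rw [← this]
  exact h

/-! #### The substitution homomorphism `σ j : s ↦ q^j s` -/

/-- the substitution polynomial `q^j * s` in `K[s]`. -/
def sp (j : ℕ) : Polynomial K := Polynomial.C (q ^ j) * Polynomial.X

lemma sp_comp (a b : ℕ) : (sp b).comp (sp a) = sp (a + b) := by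
  simp only [sp, Polynomial.mul_comp, Polynomial.C_comp, Polynomial.X_comp]
  rw [← mul_assoc, ← Polynomial.C_mul, ← pow_add, Nat.add_comm a b]

lemma comp_sp_injective (j : ℕ) :
    Function.Injective (fun p : Polynomial K => p.comp (sp j)) := by
  intro p r h
  simp only at h
  have h2 := congrArg (fun t : Polynomial K => t.comp (Polynomial.C (q ^ j)⁻¹ * Polynomial.X)) h
  simp only [Polynomial.comp_assoc] at h2
  have h3 : (sp j).comp (Polynomial.C (q ^ j)⁻¹ * Polynomial.X) = Polynomial.X := by
    rw [sp, Polynomial.mul_comp, Polynomial.C_comp, Polynomial.X_comp, ← mul_assoc,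
      ← Polynomial.C_mul, mul_inv_cancel₀ (pow_ne_zero j q_ne_zero), Polynomial.C_1, one_mul]
  rwa [h3, Polynomial.comp_X, Polynomial.comp_X] at h2

/-- `gj j p = p(q^j s)` as a rational function. -/
def gj (j : ℕ) : Polynomial K →+* S :=
  (algebraMap (Polynomial K) S).comp
    { toFun := fun p => p.comp (sp j),
      map_one' := by simp,
      map_mul' := by intro p r; simp [Polynomial.mul_comp],
      map_zero' := by simp,
      map_add' := by intro p r; simp [Polynomial.add_comp] }

lemma gj_apply (j : ℕ) (p : Polynomial K) :
    gj j p = algebraMap (Polynomial K) S (p.comp (sp j)) := rfl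

lemma gj_injective (j : ℕ) : Function.Injective (gj j) :=
  (RatFunc.algebraMap_injective K).comp (comp_sp_injective j)

/-- substitution `s ↦ q^j s` as a field hom on `S`. -/
def σ (j : ℕ) : S →+* S := IsFractionRing.lift (gj_injective j)

lemma σ_algebraMap (j : ℕ) (p : Polynomial K) :
    σ j (algebraMap (Polynomial K) S p) = algebraMap (Polynomial K) S (p.comp (sp j)) :=
  IsFractionRing.lift_algebraMap (gj_injective j) p

lemma σ_C (j : ℕ) (c : K) : σ j (RatFunc.C c) = RatFunc.C c := by
  rw [← RatFunc.algebraMap_C (K := K) c, σ_algebraMap, Polynomial.C_comp]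

lemma C_q_pow (m : ℕ) : (RatFunc.C (q ^ m) : S) = qS ^ m := by
  rw [qS, map_pow]

lemma σ_sS (j : ℕ) : σ j sS = qS ^ j * sS := by
  rw [sS, ← RatFunc.algebraMap_X (K := K), σ_algebraMap, Polynomial.X_comp, sp,
    map_mul, RatFunc.algebraMap_C, RatFunc.algebraMap_X, C_q_pow]

lemma σ_qS (j : ℕ) : σ j qS = qS := σ_C j q

lemma σ_σ (a b : ℕ) (f : S) : σ a (σ b f) = σ (a + b) f := by
  conv_lhs => rw [← RatFunc.num_div_denom f]
  conv_rhs => rw [← RatFunc.num_div_denom f]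
  simp only [map_div₀, σ_algebraMap, Polynomial.comp_assoc, sp_comp]

lemma σ_zero (f : S) : σ 0 f = f := by
  conv_lhs => rw [← RatFunc.num_div_denom f]
  rw [map_div₀, σ_algebraMap, σ_algebraMap]
  have hsp : sp 0 = Polynomial.X := by simp [sp]
  rw [hsp, Polynomial.comp_X, Polynomial.comp_X, RatFunc.num_div_denom]

lemma eval_eq_σ (j : ℕ) (f : S) :
    RatFunc.eval (RatFunc.C : K →+* S) (RatFunc.C (q ^ j) * RatFunc.X) f = σ j f := by
  have key : ∀ p : Polynomial K,
      Polynomial.eval₂ (RatFunc.C : K →+* S) (RatFunc.C (q ^ j) * RatFunc.X) p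
        = algebraMap (Polynomial K) S (p.comp (sp j)) := by
    intro p
    have h1 : (RatFunc.C (q ^ j) * RatFunc.X : S) = algebraMap (Polynomial K) S (sp j) := by
      rw [sp, map_mul, RatFunc.algebraMap_C, RatFunc.algebraMap_X]
    rw [h1, ← RatFunc.algebraMap_eq_C, ← Polynomial.aeval_def,
      ← IsScalarTower.coe_toAlgHom' K (Polynomial K) S,
      Polynomial.aeval_algHom_apply, ← Polynomial.comp_eq_aeval,
      IsScalarTower.coe_toAlgHom']
  unfold RatFunc.eval
  rw [key, key]
  conv_rhs => rw [← RatFunc.num_div_denom f]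
  rw [map_div₀, σ_algebraMap, σ_algebraMap]

/-! #### `atSq` as a ring homomorphism -/

lemma atSq_map (j : ℕ) (B : PowerSeries S) : atSq j B = PowerSeries.map (σ j) B := by
  ext n
  rw [PowerSeries.coeff_map, atSq, PowerSeries.coeff_mk]
  exact eval_eq_σ j _

lemma atSq_comp (a b : ℕ) (B : PowerSeries S) : atSq a (atSq b B) = atSq (a + b) B := by
  ext n
  simp [atSq_map, PowerSeries.coeff_map, σ_σ]

lemma atSq_zero (B : PowerSeries S) : atSq 0 B = B := by
  ext n
  simp [atSq_map, PowerSeries.coeff_map, σ_zero]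

/-- Coefficients at `s=1`. -/
def bb (A : PowerSeries S) (m : ℕ) : K := ev1 (PowerSeries.coeff m A)

lemma coeff_atOne (A : PowerSeries S) (m : ℕ) :
    PowerSeries.coeff m (atOne A) = RatFunc.C (bb A m) := by
  simp [atOne, bb]

lemma map_σ_atOne (j : ℕ) (A : PowerSeries S) :
    PowerSeries.map (σ j) (atOne A) = atOne A := by
  ext n
  simp [atOne, PowerSeries.coeff_map, σ_C]

/-! #### Basic nonvanishing over `S` -/

lemma one_sub_s_ne (m : ℕ) : (1 : S) - sS * qS ^ m ≠ 0 := by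
  have hrepr : (1 : S) - sS * qS ^ m
      = algebraMap (Polynomial K) S (1 - Polynomial.C (q ^ m) * Polynomial.X) := by
    rw [map_sub, map_one, map_mul, RatFunc.algebraMap_C, RatFunc.algebraMap_X, C_q_pow, sS]
    ring
  rw [hrepr]
  apply RatFunc.algebraMap_ne_zero
  intro h
  have h2 := congrArg (Polynomial.eval 0) h
  simp at h2

/-! #### The functional-equation pieces -/

/-- `1 - s q^{2i+2}`. -/
def dfac (i : ℕ) : S := 1 - sS * qS ^ (2*i+2)

/-- `∏_{a ≤ i < b} (1 - s q^{2i+2})`. -/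
def Dsl (a b : ℕ) : S := ∏ i ∈ Finset.Ico a b, dfac i

/-- `(-1)^j s^{2j} q^{2j²+j}`. -/
def tP (j : ℕ) : S := (-1)^j * sS^(2*j) * qS^(2*j^2+j)

/-- the head series at stage `j`, after clearing the denominator. -/
def V (A : PowerSeries S) (j : ℕ) : PowerSeries S :=
  PowerSeries.C (dfac j)
    + PowerSeries.C (sS * qS^(2*j+1) * dfac j) * PowerSeries.X
    + PowerSeries.C (dfac j) * (PowerSeries.X * atOne A)
    + PowerSeries.C (sS * qS^(2*j+1)) * (PowerSeries.X^2 * atOne A)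

lemma dfac_ne_zero (i : ℕ) : dfac i ≠ 0 := one_sub_s_ne (2*i+2)

lemma Dsl_succ (a k : ℕ) (h : a ≤ k) : Dsl a (k+1) = Dsl a k * dfac k :=
  Finset.prod_Ico_succ_top h _

lemma Dsl_self (a : ℕ) : Dsl a a = 1 := by
  rw [Dsl, Finset.Ico_self, Finset.prod_empty]

lemma tP_zero : tP 0 = 1 := by simp [tP]

lemma tP_succ (k : ℕ) : tP (k+1) = -(tP k * (sS^2 * qS^(4*k+3))) := by
  simp only [tP]
  have e1 : 2*(k+1) = 2*k+2 := by ring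
  have e2 : 2*(k+1)^2+(k+1) = (2*k^2+k) + (4*k+3) := by ring
  rw [e1, e2, pow_add, pow_add, pow_succ]
  ring

/-- the σ-images of the constants occurring in the functional equation. -/
lemma σc1 (k : ℕ) : σ (2*k) (sS * qS) = sS * qS^(2*k+1) := by
  simp only [map_mul, σ_sS, σ_qS]
  ring

lemma σc2 (k : ℕ) : σ (2*k) (sS * qS / (1 - sS * qS^2)) =
    sS * qS^(2*k+1) / (1 - sS * qS^(2*k+2)) := by
  simp only [map_div₀, map_mul, map_sub, map_one, map_pow, σ_sS, σ_qS]
  ring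

lemma σc3 (k : ℕ) : σ (2*k) (sS^2 * qS^3 / (1 - sS * qS^2)) =
    sS^2 * qS^(4*k+3) / (1 - sS * qS^(2*k+2)) := by
  simp only [map_div₀, map_mul, map_sub, map_one, map_pow, σ_sS, σ_qS]
  ring

/-- The functional equation shifted by `s ↦ s q^{2k}` and multiplied through by
`1 - s q^{2k+2}`. -/
lemma stepD (A : PowerSeries S)
    (hA : A = 1 + PowerSeries.C (sS * qS) * PowerSeries.X
        + (PowerSeries.X
            + PowerSeries.X ^ 2 * PowerSeries.C (sS * qS / (1 - sS * qS ^ 2))) * atOne A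
        - PowerSeries.X ^ 2 * PowerSeries.C (sS ^ 2 * qS ^ 3 / (1 - sS * qS ^ 2)) *
            atSq 2 A) (k : ℕ) :
    PowerSeries.C (dfac k) * atSq (2*k) A
      = V A k - PowerSeries.X^2 * PowerSeries.C (sS^2 * qS^(4*k+3)) * atSq (2*k+2) A := by
  have h0 : atSq (2*k) A = 1 + PowerSeries.C (sS * qS^(2*k+1)) * PowerSeries.X
      + (PowerSeries.X
          + PowerSeries.X ^ 2 * PowerSeries.C (sS * qS^(2*k+1) / (1 - sS * qS^(2*k+2)))) * atOne A
      - PowerSeries.X ^ 2 * PowerSeries.C (sS^2 * qS^(4*k+3) / (1 - sS * qS^(2*k+2))) *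
          atSq (2*k+2) A := by
    have hstruct : ∀ (c1 c2 c3 : S) (B R : PowerSeries S),
        PowerSeries.map (σ (2*k)) (1 + PowerSeries.C c1 * PowerSeries.X
            + (PowerSeries.X + PowerSeries.X ^ 2 * PowerSeries.C c2) * B
            - PowerSeries.X ^ 2 * PowerSeries.C c3 * R)
          = 1 + PowerSeries.C (σ (2*k) c1) * PowerSeries.X
            + (PowerSeries.X + PowerSeries.X ^ 2 * PowerSeries.C (σ (2*k) c2)) *
                PowerSeries.map (σ (2*k)) B
            - PowerSeries.X ^ 2 * PowerSeries.C (σ (2*k) c3) * PowerSeries.map (σ (2*k)) R := by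
      intro c1 c2 c3 B R
      simp only [map_add, map_sub, map_mul, map_pow, map_one, PowerSeries.map_C,
        PowerSeries.map_X]
    conv_lhs => rw [hA]
    rw [atSq_map, hstruct, map_σ_atOne, ← atSq_map, atSq_comp, σc1, σc2, σc3]
  rw [h0]
  simp only [V]
  have hd := dfac_ne_zero k
  have e1 : PowerSeries.C (sS * qS^(2*k+1) * dfac k)
      = PowerSeries.C (sS * qS^(2*k+1)) * PowerSeries.C (dfac k) := by
    rw [← map_mul]
  have e2 : PowerSeries.C (dfac k) * PowerSeries.C (sS * qS^(2*k+1) / (1 - sS * qS^(2*k+2)))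
      = PowerSeries.C (sS * qS^(2*k+1)) := by
    rw [← map_mul]
    congr 1
    rw [dfac] at hd ⊢
    field_simp
  have e3 : PowerSeries.C (dfac k) * PowerSeries.C (sS^2 * qS^(4*k+3) / (1 - sS * qS^(2*k+2)))
      = PowerSeries.C (sS^2 * qS^(4*k+3)) := by
    rw [← map_mul]
    congr 1
    rw [dfac] at hd ⊢
    field_simp
  linear_combination (-PowerSeries.X) * e1 + (PowerSeries.X^2 * atOne A) * e2
    - (PowerSeries.X^2 * atSq (2*k+2) A) * e3

/-- The iterated functional equation. -/
lemma iter (A : PowerSeries S)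
    (hA : A = 1 + PowerSeries.C (sS * qS) * PowerSeries.X
        + (PowerSeries.X
            + PowerSeries.X ^ 2 * PowerSeries.C (sS * qS / (1 - sS * qS ^ 2))) * atOne A
        - PowerSeries.X ^ 2 * PowerSeries.C (sS ^ 2 * qS ^ 3 / (1 - sS * qS ^ 2)) *
            atSq 2 A) :
    ∀ k : ℕ, PowerSeries.C (Dsl 0 k) * A
      = (∑ j ∈ Finset.range k, PowerSeries.C (tP j * Dsl (j+1) k) * PowerSeries.X^(2*j) * V A j)
        + PowerSeries.C (tP k) * PowerSeries.X^(2*k) * atSq (2*k) A := by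
  intro k
  induction k with
  | zero =>
    simp [Dsl_self, tP_zero, atSq_zero]
  | succ k ih =>
    rw [show 2*(k+1) = 2*k+2 from by ring]
    calc PowerSeries.C (Dsl 0 (k+1)) * A
        = PowerSeries.C (dfac k) * (PowerSeries.C (Dsl 0 k) * A) := by
          rw [Dsl_succ 0 k (Nat.zero_le k), map_mul]; ring
      _ = PowerSeries.C (dfac k) *
            ((∑ j ∈ Finset.range k,
                PowerSeries.C (tP j * Dsl (j+1) k) * PowerSeries.X^(2*j) * V A j)
              + PowerSeries.C (tP k) * PowerSeries.X^(2*k) * atSq (2*k) A) := by rw [ih]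
      _ = (∑ j ∈ Finset.range k,
              PowerSeries.C (tP j * Dsl (j+1) (k+1)) * PowerSeries.X^(2*j) * V A j)
            + PowerSeries.C (tP k) * PowerSeries.X^(2*k) *
                (PowerSeries.C (dfac k) * atSq (2*k) A) := by
          rw [mul_add, Finset.mul_sum]
          congr 1
          · refine Finset.sum_congr rfl fun j hj => ?_
            rw [Dsl_succ (j+1) k (Finset.mem_range.mp hj), map_mul, map_mul, map_mul]
            ring
          · ring
      _ = (∑ j ∈ Finset.range k,
              PowerSeries.C (tP j * Dsl (j+1) (k+1)) * PowerSeries.X^(2*j) * V A j)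
            + (PowerSeries.C (tP k * Dsl (k+1) (k+1)) * PowerSeries.X^(2*k) * V A k
              + PowerSeries.C (tP (k+1)) * PowerSeries.X^(2*k+2) * atSq (2*k+2) A) := by
          rw [stepD A hA k, Dsl_self, mul_one]
          have htp : PowerSeries.C (tP (k+1))
              = -(PowerSeries.C (tP k) * PowerSeries.C (sS^2 * qS^(4*k+3))) := by
            rw [← map_mul, ← map_neg]
            congr 1
            exact tP_succ k
          rw [htp]
          ring
      _ = (∑ j ∈ Finset.range (k+1),
              PowerSeries.C (tP j * Dsl (j+1) (k+1)) * PowerSeries.X^(2*j) * V A j)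
            + PowerSeries.C (tP (k+1)) * PowerSeries.X^(2*k+2) * atSq (2*k+2) A := by
          rw [Finset.sum_range_succ]
          ring

/-- Coefficient extraction from the iterated equation. -/
lemma coeffId (A : PowerSeries S)
    (hA : A = 1 + PowerSeries.C (sS * qS) * PowerSeries.X
        + (PowerSeries.X
            + PowerSeries.X ^ 2 * PowerSeries.C (sS * qS / (1 - sS * qS ^ 2))) * atOne A
        - PowerSeries.X ^ 2 * PowerSeries.C (sS ^ 2 * qS ^ 3 / (1 - sS * qS ^ 2)) *
            atSq 2 A) (n : ℕ) :
    Dsl 0 (n+1) * PowerSeries.coeff n A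
      = ∑ j ∈ Finset.range (n+1),
          (tP j * Dsl (j+1) (n+1)) * PowerSeries.coeff n (PowerSeries.X^(2*j) * V A j) := by
  have h := congrArg (PowerSeries.coeff n) (iter A hA (n+1))
  rw [map_add, map_sum] at h
  have hrem : PowerSeries.coeff n
      (PowerSeries.C (tP (n+1)) * PowerSeries.X^(2*(n+1)) * atSq (2*(n+1)) A) = 0 := by
    rw [mul_assoc, PowerSeries.coeff_C_mul, PowerSeries.coeff_X_pow_mul',
      if_neg (by omega), mul_zero]
  rw [hrem, add_zero] at h
  rw [PowerSeries.coeff_C_mul] at h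
  rw [h]
  refine Finset.sum_congr rfl fun j hj => ?_
  rw [mul_assoc, PowerSeries.coeff_C_mul]

lemma coeff_V (A : PowerSeries S) (j m : ℕ) :
    PowerSeries.coeff m (V A j)
      = (if m = 0 then dfac j else 0)
        + (if m = 1 then sS * qS^(2*j+1) * dfac j else 0)
        + (if 1 ≤ m then dfac j * RatFunc.C (bb A (m-1)) else 0)
        + (if 2 ≤ m then sS * qS^(2*j+1) * RatFunc.C (bb A (m-2)) else 0) := by
  have hX1 : (PowerSeries.X : PowerSeries S) * atOne A
      = PowerSeries.X^1 * atOne A := by rw [pow_one]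
  simp only [V, map_add, hX1, PowerSeries.coeff_C_mul, PowerSeries.coeff_X_pow_mul',
    PowerSeries.coeff_C, PowerSeries.coeff_X, coeff_atOne, mul_ite, mul_zero, mul_one]

/-! #### Polynomial models of the coefficients -/

/-- `1 - q^{2i+2} s` as a polynomial. -/
def pd (i : ℕ) : Polynomial K := 1 - Polynomial.C (q^(2*i+2)) * Polynomial.X

def pDsl (a b : ℕ) : Polynomial K := ∏ i ∈ Finset.Ico a b, pd i

def ptP (j : ℕ) : Polynomial K := (-1)^j * Polynomial.X^(2*j) * Polynomial.C (q^(2*j^2+j))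

/-- Polynomial model of the `V`-coefficient entering the `x^n` coefficient. -/
def pW (A : PowerSeries S) (n j : ℕ) : Polynomial K :=
  (if n = 2*j then pd j else 0)
    + (if n = 2*j+1 then Polynomial.C (q^(2*j+1)) * Polynomial.X * pd j else 0)
    + (if 2*j+1 ≤ n then pd j * Polynomial.C (bb A (n - (2*j+1))) else 0)
    + (if 2*j+2 ≤ n then Polynomial.C (q^(2*j+1)) * Polynomial.X * Polynomial.C (bb A (n - (2*j+2))) else 0)

def Pt (A : PowerSeries S) (n j : ℕ) : Polynomial K :=
  (ptP j * pDsl (j+1) (n+1)) * pW A n j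

lemma ι_pd (i : ℕ) : algebraMap (Polynomial K) S (pd i) = dfac i := by
  rw [pd, dfac, map_sub, map_one, map_mul, RatFunc.algebraMap_C, RatFunc.algebraMap_X, C_q_pow, sS]
  ring

lemma ι_pDsl (a b : ℕ) : algebraMap (Polynomial K) S (pDsl a b) = Dsl a b := by
  rw [pDsl, Dsl, map_prod]
  exact Finset.prod_congr rfl fun i _ => ι_pd i

lemma ι_ptP (j : ℕ) : algebraMap (Polynomial K) S (ptP j) = tP j := by
  rw [ptP, tP, map_mul, map_mul, map_pow, map_neg, map_one, map_pow, RatFunc.algebraMap_C,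
    RatFunc.algebraMap_X, C_q_pow, sS]

lemma term_repr (A : PowerSeries S) (n j : ℕ) :
    (tP j * Dsl (j+1) (n+1)) * PowerSeries.coeff n (PowerSeries.X^(2*j) * V A j)
      = algebraMap (Polynomial K) S (Pt A n j) := by
  rw [PowerSeries.coeff_X_pow_mul']
  by_cases hj : 2*j ≤ n
  · rw [if_pos hj, coeff_V]
    have hi1 : (n - 2*j = 0) ↔ (n = 2*j) := by omega
    have hi2 : (n - 2*j = 1) ↔ (n = 2*j+1) := by omega
    have hi3 : (1 ≤ n - 2*j) ↔ (2*j+1 ≤ n) := by omega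
    have hi4 : (2 ≤ n - 2*j) ↔ (2*j+2 ≤ n) := by omega
    have hi5 : n - 2*j - 1 = n - (2*j+1) := by omega
    have hi6 : n - 2*j - 2 = n - (2*j+2) := by omega
    rw [Pt, pW]
    simp only [hi1, hi2, hi3, hi4, hi5, hi6, map_add, map_mul, apply_ite
      (algebraMap (Polynomial K) S), map_zero, ι_pd, ι_pDsl, ι_ptP, RatFunc.algebraMap_C,
      RatFunc.algebraMap_X]
    have hsX : (RatFunc.X : S) = sS := rfl
    rw [hsX]
    split_ifs <;>
      first
        | (simp only [C_q_pow]; ring)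
        | (simp only [C_q_pow])
        | ring
        | simp
  · rw [if_neg hj, mul_zero]
    have h1 : ¬(n = 2*j) := by omega
    have h2 : ¬(n = 2*j+1) := by omega
    have h3 : ¬(2*j+1 ≤ n) := by omega
    have h4 : ¬(2*j+2 ≤ n) := by omega
    rw [Pt, pW, if_neg h1, if_neg h2, if_neg h3, if_neg h4]
    simp

/-! #### Evaluation at `s = 1` -/

lemma eq_num_of_denom_one (f : S) (h : f.denom = 1) :
    f = algebraMap (Polynomial K) S f.num := by
  conv_lhs => rw [← RatFunc.num_div_denom f]
  rw [h, map_one, div_one]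

lemma ev1_eq_num_eval (f : S) (h : f.denom = 1) : ev1 f = f.num.eval 1 := by
  rw [ev1]
  unfold RatFunc.eval
  rw [h, Polynomial.eval₂_one, div_one, Polynomial.eval₂_at_one, RingHom.id_apply]

/-- `1 - q^{2i+2}`, the evaluation of `pd i` at `s = 1`. -/
def Kd (i : ℕ) : K := 1 - q^(2*i+2)

def KDsl (a b : ℕ) : K := ∏ i ∈ Finset.Ico a b, Kd i

lemma eval1_pd (i : ℕ) : (pd i).eval 1 = Kd i := by
  simp [pd, Kd]

lemma eval1_pDsl (a b : ℕ) : (pDsl a b).eval 1 = KDsl a b := by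
  rw [pDsl, KDsl, Polynomial.eval_prod]
  exact Finset.prod_congr rfl fun i _ => eval1_pd i

lemma eval1_ptP (j : ℕ) : (ptP j).eval 1 = (-1)^j * q^(2*j^2+j) := by
  simp [ptP]

lemma poch2_eq_KDsl (m : ℕ) : poch2 m = KDsl 0 m := by
  rw [poch2, KDsl, Finset.range_eq_Ico]
  refine Finset.prod_congr rfl fun i _ => ?_
  rw [Kd, show 2*(i+1) = 2*i+2 from by ring]

lemma poch2_split (a b : ℕ) (h : a ≤ b) : poch2 b = poch2 a * KDsl a b := by
  rw [poch2_eq_KDsl, poch2_eq_KDsl, KDsl, KDsl, KDsl,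
    ← Finset.prod_Ico_consecutive _ (Nat.zero_le a) h]

lemma KDsl_cons (a b : ℕ) (h : a < b) : KDsl a b = Kd a * KDsl (a+1) b := by
  rw [KDsl, KDsl, Finset.prod_eq_prod_Ico_succ_bot h]

lemma KDsl_ne_zero (a b : ℕ) : KDsl a b ≠ 0 := by
  rw [KDsl]
  apply Finset.prod_ne_zero_iff.mpr
  exact fun i _ => Kd_ne_zero i

/-- The main identity over `K`, for the coefficients at `s = 1`. -/
lemma keyK (A : PowerSeries S) (hpoly : PolyCoeffs A)
    (hA : A = 1 + PowerSeries.C (sS * qS) * PowerSeries.X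
        + (PowerSeries.X
            + PowerSeries.X ^ 2 * PowerSeries.C (sS * qS / (1 - sS * qS ^ 2))) * atOne A
        - PowerSeries.X ^ 2 * PowerSeries.C (sS ^ 2 * qS ^ 3 / (1 - sS * qS ^ 2)) *
            atSq 2 A) (n : ℕ) :
    poch2 (n+1) * bb A n
      = ∑ j ∈ Finset.range (n+1),
          ((-1 : K)^j * q^(2*j^2+j)) * (KDsl (j+1) (n+1)
            * ((if n = 2*j then Kd j else 0)
              + (if n = 2*j+1 then q^(2*j+1) * Kd j else 0)
              + (if 2*j+1 ≤ n then Kd j * bb A (n - (2*j+1)) else 0)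
              + (if 2*j+2 ≤ n then q^(2*j+1) * bb A (n - (2*j+2)) else 0))) := by
  have hPolyId : pDsl 0 (n+1) * (PowerSeries.coeff n A).num
      = ∑ j ∈ Finset.range (n+1), Pt A n j := by
    apply RatFunc.algebraMap_injective K
    rw [map_mul, map_sum, ι_pDsl, ← eq_num_of_denom_one _ (hpoly n), coeffId A hA n]
    exact Finset.sum_congr rfl fun j _ => term_repr A n j
  have hE := congrArg (Polynomial.eval 1) hPolyId
  rw [Polynomial.eval_mul, eval1_pDsl, Polynomial.eval_finset_sum] at hE
  have hL : KDsl 0 (n+1) * ((PowerSeries.coeff n A).num.eval 1) = poch2 (n+1) * bb A n := by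
    rw [← poch2_eq_KDsl, bb, ev1_eq_num_eval _ (hpoly n)]
  rw [hL] at hE
  rw [hE]
  refine Finset.sum_congr rfl fun j _ => ?_
  rw [Pt, Polynomial.eval_mul, Polynomial.eval_mul, eval1_ptP, eval1_pDsl, pW]
  simp only [Polynomial.eval_add, apply_ite (Polynomial.eval (1:K)), Polynomial.eval_zero,
    Polynomial.eval_mul, Polynomial.eval_C, Polynomial.eval_X, eval1_pd, mul_one]
  ring

/-! #### Arithmetic of the coefficients of `Jcal` -/

/-- The coefficient of `Jcal`. -/
def Jc (n : ℕ) : K := (-1 : K) ^ ((n + 1) / 2) * q ^ n.choose 2 / poch2 (n / 2)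

lemma coeff_Jcal (n : ℕ) : PowerSeries.coeff n Jcal = Jc n := by
  simp [Jcal, Jc]

lemma Jc_zero : Jc 0 = 1 := by
  simp [Jc, poch2]

lemma choose_even (m : ℕ) : 2*m + (2*m).choose 2 = 2*m^2 + m := by
  rw [Nat.choose_two_right]
  cases m with
  | zero => rfl
  | succ mm =>
    have h0 : 2*(mm+1) - 1 = 2*mm+1 := by omega
    have h1 : 2*(mm+1) * (2*(mm+1) - 1) = ((mm+1)*(2*mm+1))*2 := by
      rw [h0]; ring
    rw [h1, Nat.mul_div_cancel _ (by norm_num)]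
    ring

lemma choose_odd (j : ℕ) : (2*j+1).choose 2 = 2*j^2 + j := by
  rw [Nat.choose_two_right]
  have h0 : 2*j+1-1 = 2*j := by omega
  have h1 : (2*j+1) * (2*j+1-1) = (2*j^2+j)*2 := by rw [h0]; ring
  rw [h1, Nat.mul_div_cancel _ (by norm_num)]

lemma choose_even2 (j : ℕ) : (2*j+2).choose 2 = 2*j^2+3*j+1 := by
  rw [Nat.choose_two_right]
  have h0 : 2*j+2-1 = 2*j+1 := by omega
  have h1 : (2*j+2) * (2*j+2-1) = (2*j^2+3*j+1)*2 := by rw [h0]; ring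
  rw [h1, Nat.mul_div_cancel _ (by norm_num)]

lemma Jc_odd (j : ℕ) : Jc (2*j+1) = (-1)^(j+1) * q^(2*j^2+j) / poch2 j := by
  rw [Jc]
  have h1 : (2*j+1+1)/2 = j+1 := by omega
  have h2 : (2*j+1)/2 = j := by omega
  rw [h1, h2, choose_odd]

lemma Jc_even2 (j : ℕ) : Jc (2*j+2) = (-1)^(j+1) * q^(2*j^2+3*j+1) / poch2 (j+1) := by
  rw [Jc]
  have h1 : (2*j+2+1)/2 = j+1 := by omega
  have h2 : (2*j+2)/2 = j+1 := by omega
  rw [h1, h2, choose_even2]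

lemma Jc_even_q (m : ℕ) : q^(2*m) * Jc (2*m) = (-1)^m * q^(2*m^2+m) / poch2 m := by
  rw [Jc]
  have h1 : (2*m+1)/2 = m := by omega
  have h2 : (2*m)/2 = m := by omega
  rw [h1, h2, ← choose_even m, pow_add]
  ring

/-! #### Parity splitting of sums -/

lemma sum_parity_split (f : ℕ → K) (n : ℕ) :
    ∑ i ∈ Finset.range (n+1), f i
      = f 0 + (∑ j ∈ Finset.range (n+1), if 2*j+1 ≤ n then f (2*j+1) else 0)
          + (∑ j ∈ Finset.range (n+1), if 2*j+2 ≤ n then f (2*j+2) else 0) := by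
  induction n with
  | zero => simp
  | succ n ih =>
    rw [Finset.sum_range_succ, ih]
    have key : ∀ c : ℕ, 1 ≤ c → c ≤ 2 →
        (∑ j ∈ Finset.range (n+1+1), if 2*j+c ≤ n+1 then f (2*j+c) else 0)
        = (∑ j ∈ Finset.range (n+1), if 2*j+c ≤ n then f (2*j+c) else 0)
          + (if (n+1) % 2 = c % 2 then f (n+1) else 0) := by
      intro c hc hc2
      rw [Finset.sum_range_succ, if_neg (show ¬ 2*(n+1)+c ≤ n+1 by omega), add_zero]
      have h3 : ∀ j, (if 2*j+c ≤ n+1 then f (2*j+c) else 0)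
          = (if 2*j+c ≤ n then f (2*j+c) else 0) + (if 2*j+c = n+1 then f (2*j+c) else 0) := by
        intro j
        by_cases ha : 2*j+c ≤ n
        · rw [if_pos ha, if_pos (by omega), if_neg (by omega), add_zero]
        · by_cases hb : 2*j+c = n+1
          · rw [if_pos (by omega), if_neg ha, if_pos hb, zero_add]
          · rw [if_neg (by omega), if_neg ha, if_neg hb, add_zero]
      rw [Finset.sum_congr rfl (fun j _ => h3 j), Finset.sum_add_distrib]
      congr 1
      by_cases hm : (n+1) % 2 = c % 2
      · rw [if_pos hm]
        obtain ⟨m, hm'⟩ : ∃ m, 2*m+c = n+1 := ⟨(n+1-c)/2, by omega⟩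
        have hconv : ∀ j, (if 2*j+c = n+1 then f (2*j+c) else 0)
            = (if j = m then f (n+1) else 0) := by
          intro j
          by_cases hjm : j = m
          · subst hjm
            rw [if_pos hm', hm', if_pos rfl]
          · rw [if_neg (by omega), if_neg hjm]
        rw [Finset.sum_congr rfl fun j _ => hconv j,
          Finset.sum_ite_eq' (Finset.range (n+1)) m]
        rw [if_pos (Finset.mem_range.mpr (by omega))]
      · rw [if_neg hm, Finset.sum_eq_zero]
        intro j _
        exact if_neg (by omega)
    rw [key 1 le_rfl (by omega), key 2 (by omega) (by omega)]
    have hAB : (if (n+1) % 2 = 1 % 2 then f (n+1) else 0)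
        + (if (n+1) % 2 = 2 % 2 then f (n+1) else 0) = f (n+1) := by
      by_cases hp : (n+1) % 2 = 1
      · rw [if_pos (by omega), if_neg (by omega), add_zero]
      · rw [if_neg (by omega), if_pos (by omega), zero_add]
    linear_combination -hAB

/-! #### The final recombination over `K` -/

lemma combine (b : ℕ → K) (n : ℕ)
    (h : poch2 (n+1) * b n
      = ∑ j ∈ Finset.range (n+1),
          ((-1 : K)^j * q^(2*j^2+j)) * (KDsl (j+1) (n+1)
            * ((if n = 2*j then Kd j else 0)
              + (if n = 2*j+1 then q^(2*j+1) * Kd j else 0)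
              + (if 2*j+1 ≤ n then Kd j * b (n - (2*j+1)) else 0)
              + (if 2*j+2 ≤ n then q^(2*j+1) * b (n - (2*j+2)) else 0)))) :
    ∑ i ∈ Finset.range (n+1), Jc i * b (n-i) = (-q)^n * Jc n := by
  simp only [mul_add, mul_ite, mul_zero] at h
  rw [Finset.sum_add_distrib, Finset.sum_add_distrib, Finset.sum_add_distrib] at h
  -- identify the two convolution sums
  have hS3 : ∑ j ∈ Finset.range (n+1),
      (if 2*j+1 ≤ n then ((-1 : K)^j * q^(2*j^2+j)) * (KDsl (j+1) (n+1) * (Kd j * b (n - (2*j+1)))) else 0)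
      = -(poch2 (n+1)) * ∑ j ∈ Finset.range (n+1),
          (if 2*j+1 ≤ n then Jc (2*j+1) * b (n - (2*j+1)) else 0) := by
    rw [Finset.mul_sum]
    refine Finset.sum_congr rfl fun j hj => ?_
    by_cases hc : 2*j+1 ≤ n
    · rw [if_pos hc, if_pos hc]
      have hjn : j ≤ n := by omega
      have hsplit : poch2 (n+1) = poch2 j * (Kd j * KDsl (j+1) (n+1)) := by
        rw [poch2_split j (n+1) (by omega), KDsl_cons j (n+1) (by omega)]
      have hkey : -(poch2 (n+1)) * Jc (2*j+1)
          = ((-1 : K)^j * q^(2*j^2+j)) * (KDsl (j+1) (n+1) * Kd j) := by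
        rw [Jc_odd, hsplit]
        have hp := poch2_ne_zero j
        field_simp
        ring
      linear_combination (-(b (n - (2*j+1)))) * hkey
    · rw [if_neg hc, if_neg hc, mul_zero]
  have hS4 : ∑ j ∈ Finset.range (n+1),
      (if 2*j+2 ≤ n then ((-1 : K)^j * q^(2*j^2+j)) * (KDsl (j+1) (n+1) * (q^(2*j+1) * b (n - (2*j+2)))) else 0)
      = -(poch2 (n+1)) * ∑ j ∈ Finset.range (n+1),
          (if 2*j+2 ≤ n then Jc (2*j+2) * b (n - (2*j+2)) else 0) := by
    rw [Finset.mul_sum]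
    refine Finset.sum_congr rfl fun j hj => ?_
    by_cases hc : 2*j+2 ≤ n
    · rw [if_pos hc, if_pos hc]
      have hsplit : poch2 (n+1) = poch2 (j+1) * KDsl (j+1) (n+1) :=
        poch2_split (j+1) (n+1) (by omega)
      have hkey : -(poch2 (n+1)) * Jc (2*j+2)
          = ((-1 : K)^j * q^(2*j^2+j)) * (KDsl (j+1) (n+1) * q^(2*j+1)) := by
        rw [Jc_even2, hsplit]
        have hp := poch2_ne_zero (j+1)
        field_simp
        ring
      linear_combination (-(b (n - (2*j+2)))) * hkey
    · rw [if_neg hc, if_neg hc, mul_zero]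
  have hS12 : (∑ j ∈ Finset.range (n+1),
        (if n = 2*j then ((-1 : K)^j * q^(2*j^2+j)) * (KDsl (j+1) (n+1) * Kd j) else 0))
      + (∑ j ∈ Finset.range (n+1),
        (if n = 2*j+1 then ((-1 : K)^j * q^(2*j^2+j)) * (KDsl (j+1) (n+1) * (q^(2*j+1) * Kd j)) else 0))
      = poch2 (n+1) * ((-q)^n * Jc n) := by
    rcases Nat.even_or_odd n with he | ho
    · obtain ⟨m, hm⟩ := he
      have hm2 : n = 2*m := by omega
      have hz : (∑ j ∈ Finset.range (n+1),
          (if n = 2*j+1 then ((-1 : K)^j * q^(2*j^2+j)) * (KDsl (j+1) (n+1) * (q^(2*j+1) * Kd j)) else 0)) = 0 := by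
        apply Finset.sum_eq_zero
        intro j _
        exact if_neg (by omega)
      rw [hz, add_zero]
      have hconv : ∀ j, (if n = 2*j then ((-1 : K)^j * q^(2*j^2+j)) * (KDsl (j+1) (n+1) * Kd j) else 0)
          = (if j = m then ((-1 : K)^j * q^(2*j^2+j)) * (KDsl (j+1) (n+1) * Kd j) else 0) := by
        intro j
        by_cases hjm : j = m
        · subst hjm; rw [if_pos (by omega), if_pos rfl]
        · rw [if_neg (by omega), if_neg hjm]
      rw [Finset.sum_congr rfl fun j _ => hconv j,
        Finset.sum_ite_eq' (Finset.range (n+1)) m, if_pos (Finset.mem_range.mpr (by omega))]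
      have hnq : ((-q) : K)^n = q^(2*m) := by
        rw [hm2, Even.neg_pow (even_two_mul m)]
      rw [hnq, hm2]
      have hsplit : poch2 (2*m+1) = poch2 m * (Kd m * KDsl (m+1) (2*m+1)) := by
        rw [poch2_split m (2*m+1) (by omega), KDsl_cons m (2*m+1) (by omega)]
      rw [Jc_even_q, hsplit]
      have hp := poch2_ne_zero m
      field_simp
    · obtain ⟨m, hm⟩ := ho
      have hz : (∑ j ∈ Finset.range (n+1),
          (if n = 2*j then ((-1 : K)^j * q^(2*j^2+j)) * (KDsl (j+1) (n+1) * Kd j) else 0)) = 0 := by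
        apply Finset.sum_eq_zero
        intro j _
        exact if_neg (by omega)
      rw [hz, zero_add]
      have hconv : ∀ j, (if n = 2*j+1 then ((-1 : K)^j * q^(2*j^2+j)) * (KDsl (j+1) (n+1) * (q^(2*j+1) * Kd j)) else 0)
          = (if j = m then ((-1 : K)^j * q^(2*j^2+j)) * (KDsl (j+1) (n+1) * (q^(2*j+1) * Kd j)) else 0) := by
        intro j
        by_cases hjm : j = m
        · subst hjm; rw [if_pos (by omega), if_pos rfl]
        · rw [if_neg (by omega), if_neg hjm]
      rw [Finset.sum_congr rfl fun j _ => hconv j,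
        Finset.sum_ite_eq' (Finset.range (n+1)) m, if_pos (Finset.mem_range.mpr (by omega))]
      have hnq : ((-q) : K)^n = -q^(2*m+1) := by
        rw [hm, Odd.neg_pow ⟨m, by ring⟩]
      rw [hnq, hm, Jc_odd]
      have hsplit : poch2 (2*m+1+1) = poch2 m * (Kd m * KDsl (m+1) (2*m+1+1)) := by
        rw [poch2_split m (2*m+1+1) (by omega), KDsl_cons m (2*m+1+1) (by omega)]
      rw [hsplit]
      have hp := poch2_ne_zero m
      field_simp
      ring
  rw [hS3, hS4, hS12] at h
  rw [sum_parity_split (fun i => Jc i * b (n-i)) n]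
  simp only [Nat.sub_zero, Jc_zero, one_mul]
  apply mul_left_cancel₀ (poch2_ne_zero (n+1))
  linear_combination h

/-! ### The theorem -/

/-- If `𝒜(s)` (a power series in `x` with coefficients polynomial in `s` and `q`) satisfies
`𝒜(s) = 1 + xsq + x·(1 + xsq/(1-sq²))·𝒜(1) - (x²s²q³/(1-sq²))·𝒜(sq²)`,
then `𝒜(1) = 𝒥(-xq)/𝒥(x)`. -/
theorem stmt16 (A : PowerSeries S) (hpoly : PolyCoeffs A)
    (hA : A = 1 + PowerSeries.C (sS * qS) * PowerSeries.X
        + (PowerSeries.X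
            + PowerSeries.X ^ 2 * PowerSeries.C (sS * qS / (1 - sS * qS ^ 2))) * atOne A
        - PowerSeries.X ^ 2 * PowerSeries.C (sS ^ 2 * qS ^ 3 / (1 - sS * qS ^ 2)) *
            atSq 2 A) :
    atOneK A = rescale (-q) Jcal * Jcal⁻¹ := by
  have hcoeff : ∀ n, PowerSeries.coeff n (Jcal * atOneK A)
      = PowerSeries.coeff n (rescale (-q) Jcal) := by
    intro n
    rw [PowerSeries.coeff_mul, Finset.Nat.sum_antidiagonal_eq_sum_range_succ_mk]
    have hmain := combine (bb A) n (keyK A hpoly hA n)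
    rw [PowerSeries.coeff_rescale, coeff_Jcal]
    rw [← hmain]
    refine Finset.sum_congr rfl fun i _ => ?_
    rw [coeff_Jcal]
    simp [atOneK, bb]
  have hJB : Jcal * atOneK A = rescale (-q) Jcal := PowerSeries.ext hcoeff
  have hunit : PowerSeries.constantCoeff Jcal ≠ 0 := by
    rw [← PowerSeries.coeff_zero_eq_constantCoeff, coeff_Jcal, Jc_zero]
    exact one_ne_zero
  calc atOneK A = (Jcal⁻¹ * Jcal) * atOneK A := by
        rw [PowerSeries.inv_mul_cancel _ hunit, one_mul]
    _ = Jcal⁻¹ * (Jcal * atOneK A) := by ring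
    _ = Jcal⁻¹ * rescale (-q) Jcal := by rw [hJB]
    _ = rescale (-q) Jcal * Jcal⁻¹ := by ring

end FC
end
end

section
/- The double-sum rearrangement Σ_{n≥0} ((-xs)^n q^{n(n+1)/2} / ((sq;q)_n (xsq;q)_n)) · (1 + Σ_{m≥1} (xsq^n)^m q^{m(m+1)/2} / (xsq^{n+1};q)_m) equals Σ_{N≥0} ((xs)^N q^{N(N+1)/2} / (xsq;q)_N) · Σ_{n=0}^{N} (-1)^n/(sq;q)_n, as formal power series in x and s over Q(q). -/
open PowerSeries

noncomputable section
namespace FC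

/-- The ring `ℚ(q)[[s]]` of formal power series in `s`; our series in `x` and `s`
are formal power series in `x` with coefficients in this ring. -/
abbrev R0 : Type := PowerSeries K

/-- `s` as an element of the coefficient ring. -/
def sv : R0 := PowerSeries.X

/-- `q` as an element of the coefficient ring. -/
def qC : R0 := PowerSeries.C q

/-- `(s q^t; q)_n = ∏_{i=0}^{n-1} (1 - q^{t+i} s)`, a power series in `s`. -/
def pochsK (t n : ℕ) : R0 :=
  ∏ i ∈ Finset.range n, (1 - PowerSeries.C (q ^ (t + i)) * PowerSeries.X)

/-- `(x s q^t; q)_n = ∏_{i=0}^{n-1} (1 - s q^{t+i} x)`, a power series in `x` over `ℚ(q)[[s]]`. -/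
def pochxs (t n : ℕ) : PowerSeries R0 :=
  ∏ i ∈ Finset.range n, (1 - PowerSeries.C (sv * qC ^ (t + i)) * PowerSeries.X)

/-- The inner factor `1 + Σ_{m≥1} (xsq^n)^m q^{m(m+1)/2}/(xsq^{n+1};q)_m`,
defined coefficientwise in `x`. -/
def inner18 (n : ℕ) : PowerSeries R0 :=
  PowerSeries.mk fun M =>
    (if M = 0 then 1 else 0)
      + ∑ m ∈ Finset.Icc 1 M,
          (sv ^ m * qC ^ (n * m + m * (m + 1) / 2)) *
            PowerSeries.coeff (M - m) ((pochxs (n + 1) m).invOfUnit 1)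

/-- The left-hand side
`Σ_{n≥0} ((-xs)^n q^{n(n+1)/2}/((sq;q)_n (xsq;q)_n)) · (1 + Σ_{m≥1} (xsq^n)^m q^{m(m+1)/2}/(xsq^{n+1};q)_m)`,
defined coefficientwise in `x` (the `n`-th term has `x`-order at least `n`). -/
def lhs18 : PowerSeries R0 :=
  PowerSeries.mk fun N =>
    ∑ n ∈ Finset.range (N + 1),
      ((-sv) ^ n * qC ^ (n * (n + 1) / 2) * (pochsK 1 n)⁻¹) *
        PowerSeries.coeff (N - n) ((pochxs 1 n).invOfUnit 1 * inner18 n)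

/-- The right-hand side
`Σ_{N≥0} ((xs)^N q^{N(N+1)/2}/(xsq;q)_N) · Σ_{n=0}^{N} (-1)^n/(sq;q)_n`,
defined coefficientwise in `x`. -/
def rhs18 : PowerSeries R0 :=
  PowerSeries.mk fun M =>
    ∑ N ∈ Finset.range (M + 1),
      (sv ^ N * qC ^ (N * (N + 1) / 2) *
          ∑ n ∈ Finset.range (N + 1), (-1 : R0) ^ n * (pochsK 1 n)⁻¹) *
        PowerSeries.coeff (M - N) ((pochxs 1 N).invOfUnit 1)

/-! ### Auxiliary machinery -/

/-- Shorthand for the formal inverse of `pochxs t n`. -/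
def Inv (t n : ℕ) : PowerSeries R0 := (pochxs t n).invOfUnit 1

lemma pochxs_constantCoeff (t n : ℕ) : constantCoeff (pochxs t n) = 1 := by
  unfold pochxs
  rw [map_prod]
  apply Finset.prod_eq_one
  intro i _
  simp

lemma pochxs_mul_Inv (t n : ℕ) : pochxs t n * Inv t n = 1 := by
  apply PowerSeries.mul_invOfUnit
  rw [pochxs_constantCoeff]; rfl

lemma inv_unique {a b c : PowerSeries R0} (hb : a * b = 1) (hc : a * c = 1) : b = c := by
  calc b = b * (a * c) := by rw [hc, mul_one]
    _ = (a * b) * c := by ring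
    _ = c := by rw [hb, one_mul]

lemma pochxs_zero (t : ℕ) : pochxs t 0 = 1 := by simp [pochxs]

lemma Inv_zero (t : ℕ) : Inv t 0 = 1 := by
  have h := pochxs_mul_Inv t 0
  rwa [pochxs_zero, one_mul] at h

lemma pochxs_add (n m : ℕ) : pochxs 1 n * pochxs (n + 1) m = pochxs 1 (n + m) := by
  unfold pochxs
  rw [Finset.prod_range_add]
  congr 1
  apply Finset.prod_congr rfl
  intro i _
  have h : n + 1 + i = 1 + (n + i) := by omega
  rw [h]

lemma Inv_mul_Inv (n m : ℕ) : Inv 1 n * Inv (n + 1) m = Inv 1 (n + m) := by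
  apply inv_unique (a := pochxs 1 (n + m))
  · rw [← pochxs_add]
    calc pochxs 1 n * pochxs (n + 1) m * (Inv 1 n * Inv (n + 1) m)
        = (pochxs 1 n * Inv 1 n) * (pochxs (n + 1) m * Inv (n + 1) m) := by ring
      _ = 1 := by rw [pochxs_mul_Inv, pochxs_mul_Inv, mul_one]
  · exact pochxs_mul_Inv 1 (n + m)

lemma coeff_inner18 (n b : ℕ) :
    PowerSeries.coeff b (inner18 n)
      = ∑ m ∈ Finset.range (b + 1),
          (sv ^ m * qC ^ (n * m + m * (m + 1) / 2)) *
            PowerSeries.coeff (b - m) (Inv (n + 1) m) := by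
  rw [inner18, PowerSeries.coeff_mk]
  rw [Finset.sum_range_succ']
  have h0 : (sv ^ 0 * qC ^ (n * 0 + 0 * (0 + 1) / 2)) *
      PowerSeries.coeff (b - 0) (Inv (n + 1) 0) = if b = 0 then 1 else 0 := by
    rw [Inv_zero]
    simp [PowerSeries.coeff_one]
  rw [h0, add_comm]
  congr 1
  rw [← Finset.Ico_add_one_right_eq_Icc, Finset.sum_Ico_eq_sum_range]
  have hr : b + 1 - 1 = b := by omega
  rw [hr]
  apply Finset.sum_congr rfl
  intro i _
  have h1 : 1 + i = i + 1 := by omega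
  rw [h1]
  rfl

lemma coeff_mul_congr (A B B' : PowerSeries R0) (b : ℕ)
    (h : ∀ j ≤ b, PowerSeries.coeff j B = PowerSeries.coeff j B') :
    PowerSeries.coeff b (A * B) = PowerSeries.coeff b (A * B') := by
  rw [PowerSeries.coeff_mul, PowerSeries.coeff_mul]
  apply Finset.sum_congr rfl
  intro p hp
  rw [Finset.HasAntidiagonal.mem_antidiagonal] at hp
  rw [h p.2 (by omega)]

lemma key (n b : ℕ) :
    PowerSeries.coeff b (Inv 1 n * inner18 n)
      = ∑ m ∈ Finset.range (b + 1),
          (sv ^ m * qC ^ (n * m + m * (m + 1) / 2)) *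
            PowerSeries.coeff (b - m) (Inv 1 (n + m)) := by
  set S : PowerSeries R0 :=
    ∑ m ∈ Finset.range (b + 1),
      PowerSeries.C (sv ^ m * qC ^ (n * m + m * (m + 1) / 2)) *
        (Inv (n + 1) m * PowerSeries.X ^ m) with hS
  have hcoe : ∀ j ≤ b, PowerSeries.coeff j (inner18 n) = PowerSeries.coeff j S := by
    intro j hj
    rw [coeff_inner18, hS, map_sum]
    simp only [PowerSeries.coeff_C_mul, PowerSeries.coeff_mul_X_pow']
    rw [← Finset.sum_subset (Finset.range_subset_range.2 (show j + 1 ≤ b + 1 by omega))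
      (fun m _ hm => by
        rw [Finset.mem_range] at hm
        rw [if_neg (by omega), mul_zero])]
    apply Finset.sum_congr rfl
    intro m hm
    rw [Finset.mem_range] at hm
    rw [if_pos (by omega)]
  rw [coeff_mul_congr _ _ _ _ hcoe]
  rw [Finset.mul_sum, map_sum]
  apply Finset.sum_congr rfl
  intro m hm
  rw [Finset.mem_range] at hm
  have : Inv 1 n * (PowerSeries.C (sv ^ m * qC ^ (n * m + m * (m + 1) / 2)) *
      (Inv (n + 1) m * PowerSeries.X ^ m))
      = PowerSeries.C (sv ^ m * qC ^ (n * m + m * (m + 1) / 2)) *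
        (Inv 1 (n + m) * PowerSeries.X ^ m) := by
    rw [← Inv_mul_Inv]; ring
  rw [this, PowerSeries.coeff_C_mul, PowerSeries.coeff_mul_X_pow', if_pos (by omega)]

lemma triangle_exp (n m : ℕ) :
    n * (n + 1) / 2 + (n * m + m * (m + 1) / 2) = (n + m) * ((n + m) + 1) / 2 := by
  have ha : 2 ∣ n * (n + 1) := (Nat.even_mul_succ_self n).two_dvd
  have hb : 2 ∣ m * (m + 1) := (Nat.even_mul_succ_self m).two_dvd
  have h : (n + m) * ((n + m) + 1) = n * (n + 1) + m * (m + 1) + 2 * (n * m) := by ring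
  generalize hA : n * (n + 1) = A at ha h ⊢
  generalize hB : m * (m + 1) = B at hb h ⊢
  generalize hC : (n + m) * ((n + m) + 1) = C at h ⊢
  generalize hD : n * m = D at h ⊢
  omega

lemma triangle_sum {M : Type*} [AddCommMonoid M] (N : ℕ) (f : ℕ → ℕ → M) :
    ∑ n ∈ Finset.range (N + 1), ∑ m ∈ Finset.range (N - n + 1), f n m
      = ∑ k ∈ Finset.range (N + 1), ∑ n ∈ Finset.range (k + 1), f n (k - n) := by
  rw [Finset.sum_sigma', Finset.sum_sigma']
  apply Finset.sum_nbij' (fun p => (⟨p.1 + p.2, p.1⟩ : (_ : ℕ) × ℕ))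
    (fun p => (⟨p.2, p.1 - p.2⟩ : (_ : ℕ) × ℕ))
  · rintro ⟨a, b⟩ hp
    simp only [Finset.mem_sigma, Finset.mem_range] at hp ⊢
    omega
  · rintro ⟨a, b⟩ hp
    simp only [Finset.mem_sigma, Finset.mem_range] at hp ⊢
    omega
  · rintro ⟨a, b⟩ hp
    show (⟨a, a + b - a⟩ : (_ : ℕ) × ℕ) = ⟨a, b⟩
    rw [Nat.add_sub_cancel_left]
  · rintro ⟨a, b⟩ hp
    simp only [Finset.mem_sigma, Finset.mem_range] at hp
    show (⟨b + (a - b), b⟩ : (_ : ℕ) × ℕ) = ⟨a, b⟩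
    have h : b + (a - b) = a := by omega
    rw [h]
  · rintro ⟨a, b⟩ hp
    rw [Nat.add_sub_cancel_left]

/-- The double-sum rearrangement used in the enumeration of alternating heaps of type B. -/
theorem stmt18 : lhs18 = rhs18 := by
  refine PowerSeries.ext fun N => ?_
  rw [lhs18, rhs18, PowerSeries.coeff_mk, PowerSeries.coeff_mk]
  have lhs_eq : ∀ n ∈ Finset.range (N + 1),
      ((-sv) ^ n * qC ^ (n * (n + 1) / 2) * (pochsK 1 n)⁻¹) *
        PowerSeries.coeff (N - n) ((pochxs 1 n).invOfUnit 1 * inner18 n)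
      = ∑ m ∈ Finset.range (N - n + 1),
          (fun n m => ((-1 : R0) ^ n * (pochsK 1 n)⁻¹ * sv ^ (n + m) *
              qC ^ ((n + m) * ((n + m) + 1) / 2)) *
            PowerSeries.coeff (N - (n + m)) (Inv 1 (n + m))) n m := by
    intro n hn
    rw [Finset.mem_range] at hn
    have h0 : (pochxs 1 n).invOfUnit 1 * inner18 n = Inv 1 n * inner18 n := rfl
    rw [h0, key, Finset.mul_sum]
    apply Finset.sum_congr rfl
    intro m hm
    rw [Finset.mem_range] at hm
    simp only
    have hN : N - n - m = N - (n + m) := by omega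
    rw [hN, neg_pow sv n, ← triangle_exp n m, pow_add sv n m, pow_add qC]
    ring
  have rhs_eq : ∀ k ∈ Finset.range (N + 1),
      (∑ n ∈ Finset.range (k + 1),
        (fun n m => ((-1 : R0) ^ n * (pochsK 1 n)⁻¹ * sv ^ (n + m) *
            qC ^ ((n + m) * ((n + m) + 1) / 2)) *
          PowerSeries.coeff (N - (n + m)) (Inv 1 (n + m))) n (k - n))
      = (sv ^ k * qC ^ (k * (k + 1) / 2) *
          ∑ n ∈ Finset.range (k + 1), (-1 : R0) ^ n * (pochsK 1 n)⁻¹) *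
        PowerSeries.coeff (N - k) ((pochxs 1 k).invOfUnit 1) := by
    intro k hk
    rw [Finset.mem_range] at hk
    rw [Finset.mul_sum, Finset.sum_mul]
    apply Finset.sum_congr rfl
    intro n hn
    rw [Finset.mem_range] at hn
    simp only
    have h1 : n + (k - n) = k := by omega
    rw [h1]
    have h2 : (pochxs 1 k).invOfUnit 1 = Inv 1 k := rfl
    rw [h2]
    ring
  rw [Finset.sum_congr rfl lhs_eq, triangle_sum]
  exact Finset.sum_congr rfl rhs_eq

end FC
end
end
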